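/- Let Δ := (τ, δ) be a filter that is derivation neutral (DN) for a rule r := H ← c ◇ B. If ⟨B | c⟩ is Δ-more general than ⟨H | c⟩, then ⟨H | c⟩ loops with respect to {r}. -/

import Mathlib

/- A formalization of binary CLP(C): terms, constraints, queries, rules,
   derivation steps, loops, projections, filters, DN / DNlog / DNsyn. -/

namespace CLP

/-- First-order terms over a signature of function symbols `F` with arities `arF`. -/
inductive Tm (F : Type) (arF : F → ℕ) : Type
  | var : ℕ → Tm F arF
  | app : (f : F) → (Fin (arF f) → Tm F arF) → Tm F arF

variable {F : Type} {arF : F → ℕ} {Pc : Type} {arP : Pc → ℕ}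
  {Prd : Type} {arPrd : Prd → ℕ} {D : Type}

/-- Variables of a term. -/
def Tm.fv : Tm F arF → Finset ℕ
  | .var x => {x}
  | .app _ ts => Finset.univ.biUnion fun i => (ts i).fv

/-- Apply a variable substitution to a term. -/
def Tm.rename (σ : ℕ → ℕ) : Tm F arF → Tm F arF
  | .var x => .var (σ x)
  | .app f ts => .app f fun i => (ts i).rename σ

/-- Finite conjunctions of primitive constraints (including equality). -/
inductive Con (F : Type) (arF : F → ℕ) (Pc : Type) (arP : Pc → ℕ) : Type
  | tru : Con F arF Pc arP
  | eq : Tm F arF → Tm F arF → Con F arF Pc arP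
  | prim : (c : Pc) → (Fin (arP c) → Tm F arF) → Con F arF Pc arP
  | and : Con F arF Pc arP → Con F arF Pc arP → Con F arF Pc arP

/-- Variables of a constraint. -/
def Con.fv : Con F arF Pc arP → Finset ℕ
  | .tru => ∅
  | .eq s t => s.fv ∪ t.fv
  | .prim _ ts => Finset.univ.biUnion fun i => (ts i).fv
  | .and c d => c.fv ∪ d.fv

/-- Apply a variable substitution to a constraint. -/
def Con.rename (σ : ℕ → ℕ) : Con F arF Pc arP → Con F arF Pc arP
  | .tru => .tru
  | .eq s t => .eq (s.rename σ) (t.rename σ)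
  | .prim c ts => .prim c fun i => (ts i).rename σ
  | .and c d => .and (c.rename σ) (d.rename σ)

/-- The domain of computation `D_C`: an interpretation of the function and
constraint-predicate symbols over a domain `D`. -/
structure Interp (F : Type) (arF : F → ℕ) (Pc : Type) (arP : Pc → ℕ) (D : Type) where
  fn : (f : F) → (Fin (arF f) → D) → D
  pr : (c : Pc) → (Fin (arP c) → D) → Prop

/-- Evaluation of a term under a valuation `v : Var → D`. -/
def Tm.eval (If : (f : F) → (Fin (arF f) → D) → D) (v : ℕ → D) : Tm F arF → D
  | .var x => v x
  | .app f ts => If f fun i => (ts i).eval If v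

/-- `D_C ⊨_v c`. -/
def Con.Sat (I : Interp F arF Pc arP D) (v : ℕ → D) : Con F arF Pc arP → Prop
  | .tru => True
  | .eq s t => s.eval I.fn v = t.eval I.fn v
  | .prim c ts => I.pr c fun i => (ts i).eval I.fn v
  | .and c d => c.Sat I v ∧ d.Sat I v

/-- A query `⟨p(t̃) | d⟩`. -/
structure Query (F : Type) (arF : F → ℕ) (Pc : Type) (arP : Pc → ℕ)
    (Prd : Type) (arPrd : Prd → ℕ) where
  p : Prd
  args : Fin (arPrd p) → Tm F arF
  con : Con F arF Pc arP

/-- Variables of a query. -/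
def Query.fv (S : Query F arF Pc arP Prd arPrd) : Finset ℕ :=
  (Finset.univ.biUnion fun i => (S.args i).fv) ∪ S.con.fv

/-- Apply a variable substitution to a query. -/
def Query.rename (σ : ℕ → ℕ) (S : Query F arF Pc arP Prd arPrd) :
    Query F arF Pc arP Prd arPrd :=
  ⟨S.p, fun i => (S.args i).rename σ, S.con.rename σ⟩

/-- The set `[S]` of atoms (predicate applied to domain values) described by a query `S`. -/
def Query.set (I : Interp F arF Pc arP D) (S : Query F arF Pc arP Prd arPrd) :
    Set (Σ p : Prd, Fin (arPrd p) → D) :=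
  { a | ∃ v : ℕ → D, S.con.Sat I v ∧ a = ⟨S.p, fun i => (S.args i).eval I.fn v⟩ }

/-- `S'` is more general than `S` iff `[S] ⊆ [S']`. -/
def MoreGen (I : Interp F arF Pc arP D) (S' S : Query F arF Pc arP Prd arPrd) : Prop :=
  S.set I ⊆ S'.set I

/-- A binary rule `p(s̃) ← c ◇ q(t̃)`. -/
structure Rule (F : Type) (arF : F → ℕ) (Pc : Type) (arP : Pc → ℕ)
    (Prd : Type) (arPrd : Prd → ℕ) where
  hp : Prd
  hargs : Fin (arPrd hp) → Tm F arF
  con : Con F arF Pc arP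
  bp : Prd
  bargs : Fin (arPrd bp) → Tm F arF

/-- Variables of a rule. -/
def Rule.fv (r : Rule F arF Pc arP Prd arPrd) : Finset ℕ :=
  (Finset.univ.biUnion fun i => (r.hargs i).fv) ∪ r.con.fv ∪
    (Finset.univ.biUnion fun i => (r.bargs i).fv)

/-- Apply a variable substitution to a rule. -/
def Rule.rename (σ : ℕ → ℕ) (r : Rule F arF Pc arP Prd arPrd) : Rule F arF Pc arP Prd arPrd :=
  ⟨r.hp, fun i => (r.hargs i).rename σ, r.con.rename σ, r.bp, fun i => (r.bargs i).rename σ⟩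

/-- `r'` is a variant of `r`: obtained by renaming the variables by a bijection. -/
def Rule.IsVariant (r r' : Rule F arF Pc arP Prd arPrd) : Prop :=
  ∃ ρ : ℕ ≃ ℕ, r' = r.rename ρ

/-- The query `⟨H | c⟩` of a rule `H ← c ◇ B`. -/
def Rule.headQuery (r : Rule F arF Pc arP Prd arPrd) : Query F arF Pc arP Prd arPrd :=
  ⟨r.hp, r.hargs, r.con⟩

/-- The query `⟨B | c⟩` of a rule `H ← c ◇ B`. -/
def Rule.bodyQuery (r : Rule F arF Pc arP Prd arPrd) : Query F arF Pc arP Prd arPrd :=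
  ⟨r.bp, r.bargs, r.con⟩

/-- The constraint `ũ = w̃` for two sequences of terms. -/
def argsEqCon {n : ℕ} (u w : Fin n → Tm F arF) : Con F arF Pc arP :=
  (List.ofFn fun i => Con.eq (u i) (w i)).foldr .and .tru

/-- The constraint `s̃' = ũ ∧ c' ∧ d` of the query resulting from a derivation step of
`S = ⟨p(ũ) | d⟩` with input rule `r' = p(s̃') ← c' ◇ q(t̃')`. -/
def stepCon (r' : Rule F arF Pc arP Prd arPrd) (S : Query F arF Pc arP Prd arPrd)
    (h : r'.hp = S.p) : Con F arF Pc arP :=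
  Con.and
    (argsEqCon (fun i : Fin (arPrd S.p) => r'.hargs (Fin.cast (congrArg arPrd h).symm i)) S.args)
    (Con.and r'.con S.con)

/-- Derivation step of `S` using the (already renamed-apart) input rule `r'`:
the constraint `s̃' = ũ ∧ c' ∧ d` must be satisfiable in `D_C`, and the resulting
query is `⟨q(t̃') | s̃' = ũ ∧ c' ∧ d⟩`. -/
def StepWith (I : Interp F arF Pc arP D) (r' : Rule F arF Pc arP Prd arPrd)
    (S T : Query F arF Pc arP Prd arPrd) : Prop :=
  ∃ h : r'.hp = S.p, (∃ v : ℕ → D, (stepCon r' S h).Sat I v) ∧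
    T = ⟨r'.bp, r'.bargs, stepCon r' S h⟩

/-- Derivation step `S ⟹_r T`: there is a variant `r'` of `r`, variable disjoint
with `S`, which is an input rule for a step from `S` to `T`. -/
def Step (I : Interp F arF Pc arP D) (r : Rule F arF Pc arP Prd arPrd)
    (S T : Query F arF Pc arP Prd arPrd) : Prop :=
  ∃ r' : Rule F arF Pc arP Prd arPrd,
    r.IsVariant r' ∧ Disjoint r'.fv S.fv ∧ StepWith I r' S T

/-- `S₀` loops w.r.t. the program `P`: there is an infinite derivation of `P ∪ {S₀}`,
i.e. an infinite sequence of derivation steps whose input rules are variants of rules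
of `P`, variable disjoint from `S₀` and from the input rules used at earlier steps
(standardization apart). -/
def Loops (I : Interp F arF Pc arP D) (P : Set (Rule F arF Pc arP Prd arPrd))
    (S₀ : Query F arF Pc arP Prd arPrd) : Prop :=
  ∃ (S : ℕ → Query F arF Pc arP Prd arPrd) (rv : ℕ → Rule F arF Pc arP Prd arPrd),
    S 0 = S₀ ∧
    ∀ n : ℕ, (∃ r ∈ P, r.IsVariant (rv n)) ∧
      Disjoint (rv n).fv S₀.fv ∧ (∀ m < n, Disjoint (rv n).fv (rv m).fv) ∧
      StepWith I (rv n) (S n) (S (n + 1))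

/-! ## Sets of positions, projections, filters -/

/-- The set `[S|τ]` of projected atoms described by the projection of a query on a
set of positions `τ`. -/
def Query.projSet (I : Interp F arF Pc arP D) (τ : ∀ p : Prd, Set (Fin (arPrd p)))
    (S : Query F arF Pc arP Prd arPrd) :
    Set (Σ p : Prd, {i : Fin (arPrd p) // i ∈ τ p} → D) :=
  { a | ∃ v : ℕ → D, S.con.Sat I v ∧ a = ⟨S.p, fun i => (S.args i.1).eval I.fn v⟩ }

/-- The complement `τ̄` of a set of positions. -/
def complPos (τ : ∀ p : Prd, Set (Fin (arPrd p))) : ∀ p : Prd, Set (Fin (arPrd p)) :=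
  fun p => (τ p)ᶜ

/-- A query over a projected predicate `p|τ`. -/
structure PQuery (F : Type) (arF : F → ℕ) (Pc : Type) (arP : Pc → ℕ)
    {Prd : Type} {arPrd : Prd → ℕ} (τ : ∀ p : Prd, Set (Fin (arPrd p))) (p : Prd) where
  args : {i : Fin (arPrd p) // i ∈ τ p} → Tm F arF
  con : Con F arF Pc arP

/-- The set of projected atoms described by a projected query. -/
def PQuery.set (I : Interp F arF Pc arP D) {τ : ∀ p : Prd, Set (Fin (arPrd p))} {p : Prd}
    (Q : PQuery F arF Pc arP τ p) :
    Set (Σ q : Prd, {i : Fin (arPrd q) // i ∈ τ q} → D) :=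
  { a | ∃ v : ℕ → D, Q.con.Sat I v ∧ a = ⟨p, fun i => (Q.args i).eval I.fn v⟩ }

/-- A filter `Δ = (τ, δ)`: a set of positions together with, for each predicate `p`,
a query `δ(p)` over the projected predicate `p|τ` with satisfiable constraint. -/
structure Filt {F : Type} {arF : F → ℕ} {Pc : Type} {arP : Pc → ℕ} {D : Type}
    (I : Interp F arF Pc arP D) (Prd : Type) (arPrd : Prd → ℕ) where
  τ : ∀ p : Prd, Set (Fin (arPrd p))
  δ : ∀ p : Prd, PQuery F arF Pc arP τ p
  δ_sat : ∀ p : Prd, ∃ v : ℕ → D, (δ p).con.Sat I v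

variable {I : Interp F arF Pc arP D}

/-- A query `S` satisfies the filter `Δ` iff `[S|τ] ⊆ [δ(rel(S))]`. -/
def Filt.Satisfies (Δ : Filt I Prd arPrd) (S : Query F arF Pc arP Prd arPrd) : Prop :=
  S.projSet I Δ.τ ⊆ (Δ.δ S.p).set I

/-- `S'` is `Δ`-more general than `S`: `S'|τ̄` is more general than `S|τ̄`
and `S'` satisfies `Δ`. -/
def Filt.DeltaMoreGen (Δ : Filt I Prd arPrd) (S' S : Query F arF Pc arP Prd arPrd) : Prop :=
  S.projSet I (complPos Δ.τ) ⊆ S'.projSet I (complPos Δ.τ) ∧ Δ.Satisfies S'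

/-- `Δ` is derivation neutral (DN) for `r`. -/
def Filt.DN (Δ : Filt I Prd arPrd) (r : Rule F arF Pc arP Prd arPrd) : Prop :=
  ∀ S T, Step I r S T → ∀ S', Δ.DeltaMoreGen S' S →
    ∃ T', Step I r S' T' ∧ Δ.DeltaMoreGen T' T

/-! ## Normalized rules and DNlog -/

/-- A normalized rule `p(X̃) ← c ◇ q(Ỹ)` where `X̃, Ỹ` are disjoint sequences of
distinct variables. -/
structure NRule (F : Type) (arF : F → ℕ) (Pc : Type) (arP : Pc → ℕ)
    (Prd : Type) (arPrd : Prd → ℕ) where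
  hp : Prd
  X : Fin (arPrd hp) → ℕ
  bp : Prd
  Y : Fin (arPrd bp) → ℕ
  hX : Function.Injective X
  hY : Function.Injective Y
  hXY : ∀ i j, X i ≠ Y j
  con : Con F arF Pc arP

/-- The underlying rule of a normalized rule. -/
def NRule.toRule (r : NRule F arF Pc arP Prd arPrd) : Rule F arF Pc arP Prd arPrd :=
  ⟨r.hp, fun i => .var (r.X i), r.con, r.bp, fun i => .var (r.Y i)⟩

/-- `local_var(r) = Var(c) ∖ (Var(X̃) ∪ Var(Ỹ))`. -/
def NRule.localVar (r : NRule F arF Pc arP Prd arPrd) : Set ℕ :=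
  ↑r.con.fv \ (Set.range r.X ∪ Set.range r.Y)

/-- `v` and `w` agree on all variables outside `W`. -/
def agreesOff (W : Set ℕ) (v w : ℕ → D) : Prop := ∀ x ∉ W, v x = w x

/-- Semantics under `v` of the formula `sat(s̃, Q) = ∃_{Var(Q')} (s̃ = ũ' ∧ d')`,
`Q'` a variable-disjoint variant of `Q = ⟨p|τ(ũ) | d⟩`. -/
def satFor (I : Interp F arF Pc arP D) {τ : ∀ p : Prd, Set (Fin (arPrd p))} {p : Prd}
    (s : {i : Fin (arPrd p) // i ∈ τ p} → Tm F arF) (Q : PQuery F arF Pc arP τ p)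
    (v : ℕ → D) : Prop :=
  ∃ w : ℕ → D, Q.con.Sat I w ∧ ∀ i, (s i).eval I.fn v = (Q.args i).eval I.fn w

/-- `Δ` is DNlog for a normalized rule `r = p(X̃) ← c ◇ q(Ỹ)`:
`D_C ⊨ c → ∀_{X̃|τ} [ sat(X̃|τ, δ(p)) → ∃_Y (sat(Ỹ|τ, δ(q)) ∧ c) ]` where
`Y = Var(Ỹ|τ) ∪ local_var(r)`. -/
def Filt.DNlog (Δ : Filt I Prd arPrd) (r : NRule F arF Pc arP Prd arPrd) : Prop :=
  ∀ v : ℕ → D, r.con.Sat I v →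
    ∀ v₁ : ℕ → D, agreesOff (r.X '' Δ.τ r.hp) v₁ v →
      satFor I (fun i => Tm.var (r.X i.1)) (Δ.δ r.hp) v₁ →
        ∃ v₂ : ℕ → D,
          agreesOff (r.Y '' Δ.τ r.bp ∪ r.localVar) v₂ v₁ ∧
          satFor I (fun i => Tm.var (r.Y i.1)) (Δ.δ r.bp) v₂ ∧ r.con.Sat I v₂

/-! ## Flat rules and DNsyn -/

/-- Variables of a sequence of terms. -/
def varsOf {n : ℕ} (s : Fin n → Tm F arF) : Finset ℕ :=
  Finset.univ.biUnion fun i => (s i).fv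

/-- Variables of the projection of a sequence of terms on a set of positions. -/
def varsOfProj {n : ℕ} (σ : Set (Fin n)) (s : Fin n → Tm F arF) : Set ℕ :=
  ⋃ i : {i : Fin n // i ∈ σ}, ↑(s i.1).fv

/-- A flat rule `p(X̃) ← (X̃ = s̃ ∧ Ỹ = t̃) ◇ q(Ỹ)` with `Var(s̃, t̃)` local. -/
structure FlatRule (F : Type) (arF : F → ℕ) (Pc : Type) (arP : Pc → ℕ)
    (Prd : Type) (arPrd : Prd → ℕ) extends NRule F arF Pc arP Prd arPrd where
  s : Fin (arPrd hp) → Tm F arF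
  t : Fin (arPrd bp) → Tm F arF
  con_eq : con = Con.and (argsEqCon (fun i => Tm.var (X i)) s)
                         (argsEqCon (fun i => Tm.var (Y i)) t)
  local_args : ∀ x ∈ varsOf s ∪ varsOf t, x ∉ Set.range X ∪ Set.range Y

/-! ## The constraint domain Term (logic programming) -/

/-- Finite trees (ground terms) over `F`. -/
inductive GTm (F : Type) (arF : F → ℕ) : Type
  | app : (f : F) → (Fin (arF f) → GTm F arF) → GTm F arF

/-- Arities for the empty set of constraint-predicate symbols (only `=` is available). -/
def emptyAr : Empty → ℕ := fun c => c.elim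

/-- The domain of computation of the constraint domain `Term`: the algebra of
finite trees, with no primitive constraints but equality. -/
def termInterp (F : Type) (arF : F → ℕ) : Interp F arF Empty emptyAr (GTm F arF) :=
  ⟨fun f ts => GTm.app f ts, fun c => c.elim⟩

end CLP

/-! ## Auxiliary lemmas for Statement 8 -/

namespace CLP

variable {F : Type} {arF : F → ℕ} {Pc : Type} {arP : Pc → ℕ}
  {Prd : Type} {arPrd : Prd → ℕ} {D : Type} {I : Interp F arF Pc arP D}

theorem Tm.eval_rename (If : (f : F) → (Fin (arF f) → D) → D) (σ : ℕ → ℕ) (v : ℕ → D)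
    (t : Tm F arF) : (t.rename σ).eval If v = t.eval If (fun x => v (σ x)) := by
  induction t with
  | var x => rfl
  | app f ts ih => simp only [Tm.rename, Tm.eval]; congr 1; funext i; exact ih i

theorem Tm.eval_congr (If : (f : F) → (Fin (arF f) → D) → D) {v w : ℕ → D} (t : Tm F arF)
    (h : ∀ x ∈ t.fv, v x = w x) : t.eval If v = t.eval If w := by
  induction t with
  | var x => exact h x (by simp [Tm.fv])
  | app f ts ih =>
    simp only [Tm.eval]; congr 1; funext i
    exact ih i fun x hx => h x (by simp only [Tm.fv, Finset.mem_biUnion]; exact ⟨i, Finset.mem_univ i, hx⟩)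

theorem Con.Sat_rename (σ : ℕ → ℕ) (v : ℕ → D) (c : Con F arF Pc arP) :
    (c.rename σ).Sat I v ↔ c.Sat I (fun x => v (σ x)) := by
  induction c with
  | tru => simp [Con.rename, Con.Sat]
  | eq s t => simp [Con.rename, Con.Sat, Tm.eval_rename]
  | prim c ts => simp [Con.rename, Con.Sat, Tm.eval_rename]
  | and c d ihc ihd => simp [Con.rename, Con.Sat, ihc, ihd]

theorem Con.Sat_congr {v w : ℕ → D} (c : Con F arF Pc arP)
    (h : ∀ x ∈ c.fv, v x = w x) : c.Sat I v ↔ c.Sat I w := by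
  induction c with
  | tru => simp [Con.Sat]
  | eq s t =>
    simp only [Con.Sat]
    rw [Tm.eval_congr I.fn s fun x hx => h x (by simp [Con.fv, hx]),
        Tm.eval_congr I.fn t fun x hx => h x (by simp [Con.fv, hx])]
  | prim c ts =>
    simp only [Con.Sat]
    have : ∀ i, (ts i).eval I.fn v = (ts i).eval I.fn w := fun i =>
      Tm.eval_congr I.fn _ fun x hx => h x (by
        simp only [Con.fv, Finset.mem_biUnion]; exact ⟨i, Finset.mem_univ i, hx⟩)
    rw [show (fun i => (ts i).eval I.fn v) = fun i => (ts i).eval I.fn w from funext this]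
  | and c d ihc ihd =>
    simp only [Con.Sat]
    rw [ihc fun x hx => h x (by simp [Con.fv, hx]), ihd fun x hx => h x (by simp [Con.fv, hx])]

theorem Tm.rename_eq_self {σ : ℕ → ℕ} (t : Tm F arF) (h : ∀ x ∈ t.fv, σ x = x) :
    t.rename σ = t := by
  induction t with
  | var x => simp [Tm.rename, h x (by simp [Tm.fv])]
  | app f ts ih =>
    simp only [Tm.rename, Tm.app.injEq, heq_eq_eq, true_and]
    funext i
    exact ih i fun x hx => h x (by simp only [Tm.fv, Finset.mem_biUnion]; exact ⟨i, Finset.mem_univ i, hx⟩)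

theorem Con.rename_eq_self {σ : ℕ → ℕ} (c : Con F arF Pc arP) (h : ∀ x ∈ c.fv, σ x = x) :
    c.rename σ = c := by
  induction c with
  | tru => rfl
  | eq s t =>
    simp only [Con.rename, Con.eq.injEq]
    exact ⟨Tm.rename_eq_self s fun x hx => h x (by simp [Con.fv, hx]),
           Tm.rename_eq_self t fun x hx => h x (by simp [Con.fv, hx])⟩
  | prim c ts =>
    simp only [Con.rename, Con.prim.injEq, heq_eq_eq, true_and]
    funext i
    exact Tm.rename_eq_self _ fun x hx => h x (by
      simp only [Con.fv, Finset.mem_biUnion]; exact ⟨i, Finset.mem_univ i, hx⟩)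
  | and c d ihc ihd =>
    simp only [Con.rename, Con.and.injEq]
    exact ⟨ihc fun x hx => h x (by simp [Con.fv, hx]), ihd fun x hx => h x (by simp [Con.fv, hx])⟩

theorem Tm.fv_rename (σ : ℕ → ℕ) (t : Tm F arF) :
    (t.rename σ).fv = t.fv.image σ := by
  induction t with
  | var x => simp [Tm.rename, Tm.fv]
  | app f ts ih =>
    ext x
    simp only [Tm.rename, Tm.fv, Finset.mem_biUnion, Finset.mem_image, ih, Finset.mem_univ,
      true_and]
    aesop

theorem Con.fv_rename (σ : ℕ → ℕ) (c : Con F arF Pc arP) :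
    (c.rename σ).fv = c.fv.image σ := by
  induction c with
  | tru => simp [Con.rename, Con.fv]
  | eq s t => simp [Con.rename, Con.fv, Tm.fv_rename, Finset.image_union]
  | prim c ts =>
    ext x
    simp only [Con.rename, Con.fv, Finset.mem_biUnion, Finset.mem_image, Tm.fv_rename,
      Finset.mem_univ, true_and]
    aesop
  | and c d ihc ihd => simp [Con.rename, Con.fv, ihc, ihd, Finset.image_union]

theorem Rule.fv_rename (σ : ℕ → ℕ) (r : Rule F arF Pc arP Prd arPrd) :
    (r.rename σ).fv = r.fv.image σ := by
  ext x
  simp only [Rule.rename, Rule.fv, Finset.mem_union, Finset.mem_biUnion, Finset.mem_image,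
    Con.fv_rename, Tm.fv_rename, Finset.mem_univ, true_and]
  constructor
  · rintro ((⟨i, -, y, hy, rfl⟩ | ⟨y, hy, rfl⟩) | ⟨i, -, y, hy, rfl⟩)
    exacts [⟨y, Or.inl (Or.inl ⟨i, hy⟩), rfl⟩, ⟨y, Or.inl (Or.inr hy), rfl⟩,
      ⟨y, Or.inr ⟨i, hy⟩, rfl⟩]
  · rintro ⟨y, (⟨i, hy⟩ | hy) | ⟨i, hy⟩, rfl⟩
    exacts [Or.inl (Or.inl ⟨i, Finset.mem_univ _, y, hy, rfl⟩), Or.inl (Or.inr ⟨y, hy, rfl⟩),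
      Or.inr ⟨i, Finset.mem_univ _, y, hy, rfl⟩]

theorem Tm.rename_comp (σ σ' : ℕ → ℕ) (t : Tm F arF) :
    (t.rename σ).rename σ' = t.rename (fun x => σ' (σ x)) := by
  induction t with
  | var x => rfl
  | app f ts ih =>
    simp only [Tm.rename, Tm.app.injEq, heq_eq_eq, true_and]
    funext i; exact ih i

theorem Con.rename_comp (σ σ' : ℕ → ℕ) (c : Con F arF Pc arP) :
    (c.rename σ).rename σ' = c.rename (fun x => σ' (σ x)) := by
  induction c with
  | tru => rfl
  | eq s t => simp [Con.rename, Tm.rename_comp]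
  | prim c ts => simp [Con.rename, Tm.rename_comp]
  | and c d ihc ihd => simp [Con.rename, ihc, ihd]

theorem Rule.rename_comp (σ σ' : ℕ → ℕ) (r : Rule F arF Pc arP Prd arPrd) :
    (r.rename σ).rename σ' = r.rename (fun x => σ' (σ x)) := by
  simp [Rule.rename, Tm.rename_comp, Con.rename_comp]

theorem Rule.IsVariant.rename_equiv {r r' : Rule F arF Pc arP Prd arPrd}
    (h : r.IsVariant r') (π : ℕ ≃ ℕ) : r.IsVariant (r'.rename π) := by
  obtain ⟨ρ, rfl⟩ := h
  exact ⟨ρ.trans π, by rw [Rule.rename_comp]; rfl⟩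

end CLP

namespace CLP

variable {F : Type} {arF : F → ℕ} {Pc : Type} {arP : Pc → ℕ}
  {Prd : Type} {arPrd : Prd → ℕ} {D : Type} {I : Interp F arF Pc arP D}

theorem foldr_and_sat (v : ℕ → D) (l : List (Con F arF Pc arP)) :
    Con.Sat I v (l.foldr Con.and Con.tru) ↔ ∀ c ∈ l, Con.Sat I v c := by
  induction l with
  | nil => simp [Con.Sat]
  | cons c l ih => simp only [List.foldr_cons, Con.Sat, ih, List.mem_cons]; aesop

theorem argsEqCon_sat {n : ℕ} (u w : Fin n → Tm F arF) (v : ℕ → D) :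
    (argsEqCon u w : Con F arF Pc arP).Sat I v ↔
      ∀ i, (u i).eval I.fn v = (w i).eval I.fn v := by
  rw [argsEqCon, foldr_and_sat]
  constructor
  · intro h i
    exact h _ (by rw [List.mem_ofFn]; exact ⟨i, rfl⟩)
  · rintro h c hc
    rw [List.mem_ofFn] at hc
    obtain ⟨i, rfl⟩ := hc
    exact h i

theorem argsEqCon_rename {n : ℕ} (σ : ℕ → ℕ) (u w : Fin n → Tm F arF) :
    (argsEqCon u w : Con F arF Pc arP).rename σ =
      argsEqCon (fun i => (u i).rename σ) (fun i => (w i).rename σ) := by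
  simp only [argsEqCon]
  induction n with
  | zero => simp [Con.rename]
  | succ m ih =>
    simp only [List.ofFn_succ, List.foldr_cons, Con.rename]
    rw [ih (fun i => u i.succ) (fun i => w i.succ)]

theorem Query.projSet_rename (π : ℕ ≃ ℕ) (τp : ∀ p : Prd, Set (Fin (arPrd p)))
    (S : Query F arF Pc arP Prd arPrd) :
    (S.rename π).projSet I τp = S.projSet I τp := by
  ext a
  constructor
  · rintro ⟨v, hv, rfl⟩
    refine ⟨fun x => v (π x), (Con.Sat_rename π v S.con).mp hv, ?_⟩
    show _ = (⟨S.p, _⟩ : Σ p : Prd, {i : Fin (arPrd p) // i ∈ τp p} → D)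
    congr 1
    funext i
    exact Tm.eval_rename I.fn π v (S.args i.1)
  · rintro ⟨v, hv, rfl⟩
    refine ⟨fun x => v (π.symm x), ?_, ?_⟩
    · refine (Con.Sat_rename π _ S.con).mpr ?_
      simpa using hv
    · show _ = (⟨S.p, _⟩ : Σ p : Prd, {i : Fin (arPrd p) // i ∈ τp p} → D)
      congr 1
      funext i
      rw [show (S.rename π).args = fun j => (S.args j).rename π from rfl,
        Tm.eval_rename]
      exact Tm.eval_congr I.fn _ (fun x _ => by simp)

theorem Filt.Satisfies_rename (Δ : Filt I Prd arPrd) (π : ℕ ≃ ℕ)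
    (S : Query F arF Pc arP Prd arPrd) :
    Δ.Satisfies (S.rename π) ↔ Δ.Satisfies S := by
  unfold Filt.Satisfies
  rw [Query.projSet_rename]
  rfl

theorem Filt.DeltaMoreGen_rename_left (Δ : Filt I Prd arPrd) (π : ℕ ≃ ℕ)
    (T X : Query F arF Pc arP Prd arPrd) :
    Δ.DeltaMoreGen (T.rename π) X ↔ Δ.DeltaMoreGen T X := by
  unfold Filt.DeltaMoreGen
  rw [Query.projSet_rename, Filt.Satisfies_rename]

theorem Filt.DeltaMoreGen.trans {Δ : Filt I Prd arPrd}
    {A B C : Query F arF Pc arP Prd arPrd}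
    (h1 : Δ.DeltaMoreGen A B) (h2 : Δ.DeltaMoreGen B C) : Δ.DeltaMoreGen A C :=
  ⟨h2.1.trans h1.1, h1.2⟩

theorem exists_fresh_equiv (A B : Finset ℕ) :
    ∃ π : ℕ ≃ ℕ, (∀ x ∈ A, π x ∉ B) ∧ (∀ x, x ∉ A → x ∈ B → π x = x) := by
  classical
  set M := (A ∪ B).sup id + 1 with hM
  have hlt : ∀ x ∈ A ∪ B, x < M := fun x hx =>
    Nat.lt_succ_of_le (Finset.le_sup (f := id) hx)
  have hA : ∀ x ∈ A, x < M := fun x hx => hlt x (Finset.mem_union_left _ hx)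
  have hB : ∀ x ∈ B, x < M := fun x hx => hlt x (Finset.mem_union_right _ hx)
  set f : ℕ → ℕ := fun x => if x ∈ A then x + M else if M ≤ x ∧ x - M ∈ A then x - M else x
    with hf
  have hinv : Function.Involutive f := by
    intro x
    by_cases h1 : x ∈ A
    · have hx : x < M := hA _ h1
      have e1 : f x = x + M := by simp [hf, h1]
      have h2 : x + M ∉ A := fun h => by have := hA _ h; omega
      have e2 : f (x + M) = x := by
        have h3 : (M ≤ x + M ∧ x + M - M ∈ A) := ⟨by omega, by simpa using h1⟩
        simp only [hf, if_neg h2, if_pos h3]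
        omega
      rw [e1, e2]
    · by_cases h2 : M ≤ x ∧ x - M ∈ A
      · have e1 : f x = x - M := by simp [hf, h1, h2]
        have e2 : f (x - M) = x := by
          simp only [hf, if_pos h2.2]
          omega
        rw [e1, e2]
      · have e1 : f x = x := by simp [hf, h1, h2]
        rw [e1, e1]
  refine ⟨Function.Involutive.toPerm f hinv, ?_, ?_⟩
  · intro x hx hmem
    have e : (Function.Involutive.toPerm f hinv) x = f x := rfl
    have e2 : f x = x + M := by simp [hf, hx]
    rw [e, e2] at hmem
    have := hB _ hmem
    omega
  · intro x hxA hxB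
    have h2 : ¬ (M ≤ x ∧ x - M ∈ A) := fun h => by have := hB _ hxB; omega
    show f x = x
    simp [hf, hxA, h2]

end CLP

namespace CLP

variable {F : Type} {arF : F → ℕ} {Pc : Type} {arP : Pc → ℕ}
  {Prd : Type} {arPrd : Prd → ℕ} {D : Type} {I : Interp F arF Pc arP D}

theorem Rule.con_fv_subset (r : Rule F arF Pc arP Prd arPrd) : r.con.fv ⊆ r.fv := by
  intro x hx; simp [Rule.fv, hx]

theorem Rule.hargs_fv_subset (r : Rule F arF Pc arP Prd arPrd) (i : Fin (arPrd r.hp)) :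
    (r.hargs i).fv ⊆ r.fv := by
  intro x hx
  simp only [Rule.fv, Finset.mem_union, Finset.mem_biUnion]
  exact Or.inl (Or.inl ⟨i, Finset.mem_univ i, hx⟩)

theorem Rule.bargs_fv_subset (r : Rule F arF Pc arP Prd arPrd) (i : Fin (arPrd r.bp)) :
    (r.bargs i).fv ⊆ r.fv := by
  intro x hx
  simp only [Rule.fv, Finset.mem_union, Finset.mem_biUnion]
  exact Or.inr ⟨i, Finset.mem_univ i, hx⟩

theorem Rule.headQuery_fv_subset (r : Rule F arF Pc arP Prd arPrd) :
    r.headQuery.fv ⊆ r.fv := by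
  intro x hx
  simp only [Query.fv, Rule.headQuery, Finset.mem_union, Finset.mem_biUnion] at hx
  rcases hx with ⟨i, _, hx⟩ | hx
  · exact r.hargs_fv_subset i hx
  · exact r.con_fv_subset hx

theorem Query.args_fv_subset (S : Query F arF Pc arP Prd arPrd) (i : Fin (arPrd S.p)) :
    (S.args i).fv ⊆ S.fv := by
  intro x hx
  simp only [Query.fv, Finset.mem_union, Finset.mem_biUnion]
  exact Or.inl ⟨i, Finset.mem_univ i, hx⟩

theorem Query.con_fv_subset (S : Query F arF Pc arP Prd arPrd) : S.con.fv ⊆ S.fv := by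
  intro x hx; simp [Query.fv, hx]

/-- Transfer of a `StepWith` along a renaming of the input rule that fixes the
variables of the query. -/
theorem StepWith.rename_rule (π : ℕ ≃ ℕ) {r' : Rule F arF Pc arP Prd arPrd}
    {S T : Query F arF Pc arP Prd arPrd}
    (hfix : ∀ x ∈ S.fv, π x = x) (h : StepWith I r' S T) :
    StepWith I (r'.rename π) S (T.rename π) := by
  obtain ⟨hp, ⟨v, hv⟩, rfl⟩ := h
  have hp' : (r'.rename π).hp = S.p := hp
  have hargsfix : (fun i => (S.args i).rename π) = S.args :=
    funext fun i => Tm.rename_eq_self _ (fun x hx => hfix x (S.args_fv_subset i hx))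
  have hconfix : S.con.rename π = S.con :=
    Con.rename_eq_self _ (fun x hx => hfix x (S.con_fv_subset hx))
  have hcon : stepCon (r'.rename π) S hp' = (stepCon r' S hp).rename π := by
    show _ = Con.and _ (Con.and _ _)
    rw [argsEqCon_rename, hconfix, hargsfix]
    rfl
  refine ⟨hp', ⟨fun x => v (π.symm x), ?_⟩, ?_⟩
  · rw [hcon, Con.Sat_rename]
    simpa using hv
  · show _ = Query.mk _ _ _
    rw [hcon]
    rfl

/-- The initial derivation step from `⟨H | c⟩`, with resulting query
semantically equal to `⟨B | c⟩`. -/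
theorem exists_initial_step (r : Rule F arF Pc arP Prd arPrd)
    (hc : ∃ v : ℕ → D, r.con.Sat I v) :
    ∃ (r' : Rule F arF Pc arP Prd arPrd) (T : Query F arF Pc arP Prd arPrd),
      r.IsVariant r' ∧ Disjoint r'.fv r.headQuery.fv ∧
      StepWith I r' r.headQuery T ∧ T.p = r.bodyQuery.p ∧
      (∀ τp : ∀ p : Prd, Set (Fin (arPrd p)), T.projSet I τp = r.bodyQuery.projSet I τp) := by
  classical
  obtain ⟨π, hπ1, hπ2⟩ := exists_fresh_equiv r.fv r.fv
  set r' := r.rename π with hr'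
  have hfvr' : r'.fv = r.fv.image π := Rule.fv_rename π r
  have hdisj : Disjoint r'.fv r.headQuery.fv := by
    rw [Finset.disjoint_left]
    intro x hx hx2
    rw [hfvr', Finset.mem_image] at hx
    obtain ⟨y, hy, rfl⟩ := hx
    exact hπ1 y hy (r.headQuery_fv_subset hx2)
  have hp : r'.hp = r.headQuery.p := rfl
  -- the key witness construction
  have key : ∀ v : ℕ → D, r.con.Sat I v →
      ∃ w : ℕ → D, Con.Sat I w (stepCon r' r.headQuery hp) ∧
        ∀ i, ((r.bargs i).rename π).eval I.fn w = (r.bargs i).eval I.fn v := by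
    intro v hv
    set w : ℕ → D := fun x => if x ∈ r.fv.image π then v (π.symm x) else v x with hw
    have hw1 : ∀ y ∈ r.fv, w (π y) = v y := by
      intro y hy
      have : (π y : ℕ) ∈ r.fv.image π := Finset.mem_image_of_mem π hy
      simp only [hw, this, if_pos, Equiv.symm_apply_apply]
    have hw2 : ∀ y ∈ r.fv, w y = v y := by
      intro y hy
      have : y ∉ r.fv.image π := by
        rw [Finset.mem_image]
        rintro ⟨z, hz, rfl⟩
        exact hπ1 z hz hy
      simp only [hw, this, if_neg, if_false]
    have hargs : ∀ i : Fin (arPrd r.hp),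
        ((r.hargs i).rename π).eval I.fn w = (r.hargs i).eval I.fn w := by
      intro i
      rw [Tm.eval_rename]
      rw [Tm.eval_congr I.fn (r.hargs i) (fun x hx => hw1 x (r.hargs_fv_subset i hx)),
        Tm.eval_congr I.fn (r.hargs i) (fun x hx => hw2 x (r.hargs_fv_subset i hx))]
    have hbargs : ∀ i, ((r.bargs i).rename π).eval I.fn w = (r.bargs i).eval I.fn v := by
      intro i
      rw [Tm.eval_rename]
      exact Tm.eval_congr I.fn (r.bargs i) (fun x hx => hw1 x (r.bargs_fv_subset i hx))
    have hconw : Con.Sat I w r.con := by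
      rw [Con.Sat_congr r.con (fun x hx => hw2 x (r.con_fv_subset hx))]
      exact hv
    have hconw' : Con.Sat I w (r.con.rename π) := by
      rw [Con.Sat_rename]
      rw [Con.Sat_congr r.con (fun x hx => hw1 x (r.con_fv_subset hx))]
      exact hv
    refine ⟨w, ?_, hbargs⟩
    refine ⟨?_, hconw', hconw⟩
    rw [show (fun i : Fin (arPrd r.headQuery.p) =>
        r'.hargs (Fin.cast (congrArg arPrd hp).symm i)) = r'.hargs from rfl]
    refine (argsEqCon_sat _ _ _).mpr ?_
    intro i
    exact hargs i
  obtain ⟨v, hv⟩ := hc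
  obtain ⟨w, hsatw, _⟩ := key v hv
  refine ⟨r', ⟨r'.bp, r'.bargs, stepCon r' r.headQuery hp⟩, ⟨π, rfl⟩, hdisj,
    ⟨hp, ⟨w, hsatw⟩, rfl⟩, rfl, ?_⟩
  intro τp
  ext a
  constructor
  · rintro ⟨v', hv', rfl⟩
    obtain ⟨_, hc', _⟩ := hv'
    refine ⟨fun x => v' (π x), (Con.Sat_rename π v' r.con).mp hc', ?_⟩
    show _ = (⟨r.bp, _⟩ : Σ p : Prd, {i : Fin (arPrd p) // i ∈ τp p} → D)
    congr 1
    funext i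
    exact Tm.eval_rename I.fn π v' (r.bargs i.1)
  · rintro ⟨v', hv', rfl⟩
    obtain ⟨w', hsatw', hbargs'⟩ := key v' hv'
    refine ⟨w', hsatw', ?_⟩
    show _ = (⟨r.bp, _⟩ : Σ p : Prd, {i : Fin (arPrd p) // i ∈ τp p} → D)
    congr 1
    funext i
    exact (hbargs' i.1).symm

end CLP

namespace CLP

variable {F : Type} {arF : F → ℕ} {Pc : Type} {arP : Pc → ℕ}
  {Prd : Type} {arPrd : Prd → ℕ} {D : Type} {I : Interp F arF Pc arP D}

/-- Key step lemma: from a known step `Bc ⟹ T1` with `T1` `Δ`-more general than `Bc`,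
any query `Q` that is `Δ`-more general than `Bc` admits a step whose input rule avoids
any prescribed finite set of variables, and whose result is again `Δ`-more general
than `Bc`. -/
theorem key_step (r : Rule F arF Pc arP Prd arPrd) (Δ : Filt I Prd arPrd) (hDN : Δ.DN r)
    {Bc T1 : Query F arF Pc arP Prd arPrd} (hstep : Step I r Bc T1)
    (hT1 : Δ.DeltaMoreGen T1 Bc)
    (Q : Query F arF Pc arP Prd arPrd) (U : Finset ℕ) (hQ : Δ.DeltaMoreGen Q Bc) :
    ∃ y : Rule F arF Pc arP Prd arPrd × Query F arF Pc arP Prd arPrd,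
      r.IsVariant y.1 ∧ Disjoint y.1.fv U ∧ StepWith I y.1 Q y.2 ∧
        Δ.DeltaMoreGen y.2 Bc := by
  obtain ⟨T, ⟨r', hvar, hdisj, hsw⟩, hTmg⟩ := hDN Bc T1 hstep Q hQ
  obtain ⟨π, hπ1, hπ2⟩ := exists_fresh_equiv r'.fv (r'.fv ∪ U ∪ Q.fv)
  have hfix : ∀ x ∈ Q.fv, π x = x := fun x hx =>
    hπ2 x (Finset.disjoint_right.mp hdisj hx) (by simp [hx])
  refine ⟨(r'.rename π, T.rename π), hvar.rename_equiv π, ?_,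
    StepWith.rename_rule π hfix hsw,
    (Δ.DeltaMoreGen_rename_left π T Bc).mpr (hTmg.trans hT1)⟩
  rw [Finset.disjoint_left]
  intro x hx hxU
  rw [Rule.fv_rename, Finset.mem_image] at hx
  obtain ⟨y, hy, rfl⟩ := hx
  exact hπ1 y hy (by simp [hxU])

end CLP

open CLP in
/-- if `Δ` is DN for `r = H ← c ◇ B` (with `c` satisfiable) and
`⟨B|c⟩` is `Δ`-more general than `⟨H|c⟩`, then `⟨H|c⟩` loops w.r.t. `{r}`. -/
theorem stmt8 {F : Type} {arF : F → ℕ} {Pc : Type} {arP : Pc → ℕ}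
    {Prd : Type} {arPrd : Prd → ℕ} {D : Type} {I : Interp F arF Pc arP D}
    (r : Rule F arF Pc arP Prd arPrd) (hc : ∃ v : ℕ → D, r.con.Sat I v)
    (Δ : Filt I Prd arPrd) (hDN : Δ.DN r)
    (hmg : Δ.DeltaMoreGen r.bodyQuery r.headQuery) :
    Loops I {r} r.headQuery := by
  classical
  obtain ⟨r0, T0, hvar0, hdisj0, hsw0, hT0p, hproj0⟩ := exists_initial_step r hc
  have hT0mgB : Δ.DeltaMoreGen T0 r.bodyQuery := by
    constructor
    · rw [hproj0]
    · intro a ha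
      rw [hproj0] at ha
      have h2 := hmg.2 ha
      rw [hT0p]
      exact h2
  have hstep0 : Step I r r.headQuery T0 := ⟨r0, hvar0, hdisj0, hsw0⟩
  obtain ⟨T1, hstepB, hT1mg⟩ := hDN _ _ hstep0 r.bodyQuery hmg
  have hT1mgB : Δ.DeltaMoreGen T1 r.bodyQuery := hT1mg.trans hT0mgB
  have next : ∀ x : Query F arF Pc arP Prd arPrd × Finset ℕ,
      Δ.DeltaMoreGen x.1 r.bodyQuery →
      ∃ y : Rule F arF Pc arP Prd arPrd × Query F arF Pc arP Prd arPrd,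
        r.IsVariant y.1 ∧ Disjoint y.1.fv x.2 ∧ StepWith I y.1 x.1 y.2 ∧
          Δ.DeltaMoreGen y.2 r.bodyQuery :=
    fun x hx => key_step r Δ hDN hstepB hT1mgB x.1 x.2 hx
  choose pick hpick1 hpick2 hpick3 hpick4 using next
  let St := {x : Query F arF Pc arP Prd arPrd × Finset ℕ //
    Δ.DeltaMoreGen x.1 r.bodyQuery}
  let step : St → St := fun x =>
    ⟨((pick x.1 x.2).2, x.1.2 ∪ (pick x.1 x.2).1.fv), hpick4 x.1 x.2⟩
  let G : ℕ → St := fun n =>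
    step^[n] ⟨(T0, r.headQuery.fv ∪ r0.fv), hT0mgB⟩
  have hGzero : G 0 = ⟨(T0, r.headQuery.fv ∪ r0.fv), hT0mgB⟩ := rfl
  have hGsucc : ∀ n, G (n+1) = step (G n) := fun n =>
    Function.iterate_succ_apply' step n _
  have hsub : ∀ k, ((G k).1.2 : Finset ℕ) ⊆ (G (k+1)).1.2 := by
    intro k
    rw [hGsucc]
    exact Finset.subset_union_left
  have hmono : ∀ m n, m ≤ n → ((G m).1.2 : Finset ℕ) ⊆ (G n).1.2 := by
    intro m n hmn
    induction hmn with
    | refl => exact subset_rfl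
    | step _ ih => exact ih.trans (hsub _)
  have hhead_sub : ∀ n, r.headQuery.fv ⊆ (G n).1.2 := fun n =>
    (Finset.subset_union_left).trans (hmono 0 n (Nat.zero_le n))
  refine ⟨fun n => Nat.casesOn n r.headQuery (fun m => (G m).1.1),
    fun n => Nat.casesOn n r0 (fun m => (pick (G m).1 (G m).2).1), rfl, ?_⟩
  have hrv_sub : ∀ m n, m ≤ n →
      (Nat.casesOn m r0 (fun k => (pick (G k).1 (G k).2).1) :
        Rule F arF Pc arP Prd arPrd).fv ⊆ (G n).1.2 := by
    intro m n hmn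
    cases m with
    | zero =>
      refine Finset.Subset.trans ?_ (hmono 0 n hmn)
      rw [hGzero]
      exact Finset.subset_union_right
    | succ k =>
      refine Finset.Subset.trans ?_ (hmono (k+1) n hmn)
      rw [hGsucc k]
      exact Finset.subset_union_right
  intro n
  cases n with
  | zero =>
    refine ⟨⟨r, rfl, hvar0⟩, hdisj0, fun m hm => absurd hm (Nat.not_lt_zero m), hsw0⟩
  | succ m =>
    refine ⟨⟨r, rfl, hpick1 (G m).1 (G m).2⟩, ?_, ?_, ?_⟩
    · exact Finset.disjoint_of_subset_right (hhead_sub m) (hpick2 (G m).1 (G m).2)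
    · intro k hk
      exact Finset.disjoint_of_subset_right
        (hrv_sub k m (Nat.lt_succ_iff.mp hk)) (hpick2 (G m).1 (G m).2)
    · have h3 := hpick3 (G m).1 (G m).2
      have : (G (m+1)).1.1 = (pick (G m).1 (G m).2).2 := by rw [hGsucc]
      show StepWith I (pick (G m).1 (G m).2).1 ((G m).1.1) ((G (m+1)).1.1)
      rw [this]
      exact h3
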